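/- Let R be a semiring and f : M → N a morphism of R-modules. Then f is an equalizer of some morphism g : N → L and the zero map if and only if f is injective and f(M) is a saturated submodule of N. -/
import Mathlib


universe u

/-- A submodule `N` of a module `M` over a semiring is *saturated* if
`x + y ∈ N` and `y ∈ N` imply `x ∈ N`. -/
def SaturatedSub {R M : Type*} [Semiring R] [AddCommMonoid M] [Module R M]
    (N : Submodule R M) : Prop :=
  ∀ x y : M, x + y ∈ N → y ∈ N → x ∈ N

/-- A bundled module over a semiring `R`. -/
structure BundledMod (R : Type u) [Semiring R] : Type (u + 1) where
  carrier : Type u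
  [addCommMonoid : AddCommMonoid carrier]
  [module : Module R carrier]

attribute [instance] BundledMod.addCommMonoid BundledMod.module

section SatCon

variable {R : Type u} [Semiring R] {N : Type u} [AddCommMonoid N] [Module R N]

/-- The additive congruence on `N` identifying `x` and `y` when `x + a = y + b`
for some `a, b ∈ S`. -/
def satCon (S : Submodule R N) : AddCon N where
  r x y := ∃ a ∈ S, ∃ b ∈ S, x + a = y + b
  iseqv := by
    refine ⟨fun x => ⟨0, S.zero_mem, 0, S.zero_mem, rfl⟩, ?_, ?_⟩
    · rintro x y ⟨a, ha, b, hb, h⟩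
      exact ⟨b, hb, a, ha, h.symm⟩
    · rintro x y z ⟨a, ha, b, hb, h1⟩ ⟨c, hc, d, hd, h2⟩
      refine ⟨a + c, S.add_mem ha hc, d + b, S.add_mem hd hb, ?_⟩
      rw [← add_assoc, h1, add_right_comm, h2, add_right_comm, add_assoc, add_comm b d]
  add' := by
    rintro w x y z ⟨a, ha, b, hb, h1⟩ ⟨c, hc, d, hd, h2⟩
    refine ⟨a + c, S.add_mem ha hc, b + d, S.add_mem hb hd, ?_⟩
    rw [add_add_add_comm, h1, h2, add_add_add_comm]

instance satConSMul (S : Submodule R N) : SMul R (satCon S).Quotient where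
  smul r := Quotient.map' (fun n => r • n) (by
    rintro x y ⟨a, ha, b, hb, h⟩
    exact ⟨r • a, S.smul_mem r ha, r • b, S.smul_mem r hb, by
      rw [← smul_add, h, smul_add]⟩)

@[simp] lemma satCon_smul_mk (S : Submodule R N) (r : R) (n : N) :
    (r • ((n : (satCon S).Quotient))) = ((r • n : N) : (satCon S).Quotient) := rfl

instance satConModule (S : Submodule R N) : Module R (satCon S).Quotient where
  one_smul := fun q => Quotient.inductionOn' q (fun n => by
    show ((1 : R) • n : N) = (n : (satCon S).Quotient); rw [one_smul])
  mul_smul := fun r s q => Quotient.inductionOn' q (fun n => by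
    show (((r * s) • n : N) : (satCon S).Quotient) = _
    rw [mul_smul]; rfl)
  smul_zero := fun r => by
    show ((r • (0 : N) : N) : (satCon S).Quotient) = _
    rw [smul_zero]; rfl
  smul_add := fun r q₁ q₂ => Quotient.inductionOn₂' q₁ q₂ (fun m n => by
    show ((r • (m + n) : N) : (satCon S).Quotient) = (((r • m) + (r • n) : N) : (satCon S).Quotient)
    rw [smul_add])
  add_smul := fun r s q => Quotient.inductionOn' q (fun n => by
    show (((r + s) • n : N) : (satCon S).Quotient) = ((r • n + s • n : N) : (satCon S).Quotient)
    rw [add_smul])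
  zero_smul := fun q => Quotient.inductionOn' q (fun n => by
    show (((0 : R) • n : N) : (satCon S).Quotient) = _
    rw [zero_smul]; rfl)

/-- The quotient map as a linear map. -/
def satConMap (S : Submodule R N) : N →ₗ[R] (satCon S).Quotient where
  toFun := fun n => (n : (satCon S).Quotient)
  map_add' := fun _ _ => rfl
  map_smul' := fun _ _ => rfl

lemma satConMap_eq_zero_iff (S : Submodule R N) (n : N) :
    satConMap S n = 0 ↔ ∃ a ∈ S, ∃ b ∈ S, n + a = b := by
  show ((n : (satCon S).Quotient) = ((0 : N) : (satCon S).Quotient)) ↔ _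
  rw [AddCon.eq]
  constructor
  · rintro ⟨a, ha, b, hb, h⟩
    exact ⟨a, ha, b, hb, by rw [h, zero_add]⟩
  · rintro ⟨a, ha, b, hb, h⟩
    exact ⟨a, ha, b, hb, by rw [h, zero_add]⟩

end SatCon

/-- A morphism `f : M → N` of modules over a semiring `R` is an equalizer of some
morphism `g : N → L` and the zero map (in the categorical sense) iff `f` is injective
and its image is a saturated submodule of `N`. -/
theorem stmt5 {R : Type u} [Semiring R] {M N : Type u}
    [AddCommMonoid M] [Module R M] [AddCommMonoid N] [Module R N]
    (f : M →ₗ[R] N) :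
    (∃ (L : BundledMod R) (g : N →ₗ[R] L.carrier),
        (∀ m : M, g (f m) = 0) ∧
        ∀ (P : BundledMod R) (h : P.carrier →ₗ[R] N),
          (∀ p, g (h p) = 0) → ∃! u : P.carrier →ₗ[R] M, f.comp u = h) ↔
    (Function.Injective f ∧ SaturatedSub (LinearMap.range f)) := by
  constructor
  · rintro ⟨L, g, hgf, huniv⟩
    have key : ∀ x : N, g x = 0 → x ∈ LinearMap.range f := by
      intro x hx
      obtain ⟨u, hu, -⟩ := huniv ⟨R⟩ (LinearMap.toSpanSingleton R N x)
        (fun r => by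
          show g (r • x) = 0
          rw [map_smul, hx, smul_zero])
      refine ⟨u 1, ?_⟩
      have := congrArg (fun φ => φ 1) hu
      simpa using this
    constructor
    · intro m₁ m₂ hm
      obtain ⟨u, hu, huniq⟩ := huniv ⟨R⟩ (LinearMap.toSpanSingleton R N (f m₁))
        (fun r => by
          show g (r • f m₁) = 0
          rw [map_smul, hgf, smul_zero])
      have h₁ : f.comp (LinearMap.toSpanSingleton R M m₁) =
          LinearMap.toSpanSingleton R N (f m₁) := by
        ext; simp
      have h₂ : f.comp (LinearMap.toSpanSingleton R M m₂) =
          LinearMap.toSpanSingleton R N (f m₁) := by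
        ext; simp [hm]
      have := (huniq _ h₁).trans (huniq _ h₂).symm
      have := congrArg (fun φ => φ 1) this
      simpa using this
    · intro x y hxy hy
      obtain ⟨m, hm⟩ := hy
      obtain ⟨m', hm'⟩ := hxy
      have hgx : g x = 0 := by
        have h1 : g (x + y) = 0 := by rw [← hm', hgf]
        have h2 : g y = 0 := by rw [← hm, hgf]
        calc g x = g x + g y := by rw [h2, add_zero]
          _ = g (x + y) := by rw [map_add]
          _ = 0 := h1
      exact key x hgx
  · rintro ⟨hinj, hsat⟩
    refine ⟨⟨(satCon (LinearMap.range f)).Quotient⟩, satConMap _, ?_, ?_⟩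
    · intro m
      rw [satConMap_eq_zero_iff]
      exact ⟨0, Submodule.zero_mem _, f m, ⟨m, rfl⟩, by rw [add_zero]⟩
    · intro P h hh
      have hmem : ∀ p : P.carrier, h p ∈ LinearMap.range f := by
        intro p
        obtain ⟨a, ha, b, hb, hab⟩ := (satConMap_eq_zero_iff _ _).1 (hh p)
        exact hsat (h p) a (hab ▸ hb) ha
      choose v hv using hmem
      have vadd : ∀ p q, v (p + q) = v p + v q := by
        intro p q
        apply hinj
        rw [map_add, hv, hv, hv, map_add]
      have vsmul : ∀ (r : R) p, v (r • p) = r • v p := by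
        intro r p
        apply hinj
        rw [map_smul, hv, hv, map_smul]
      refine ⟨⟨⟨v, vadd⟩, vsmul⟩, ?_, ?_⟩
      · ext p; exact hv p
      · intro u' hu'
        ext p
        apply hinj
        show f (u' p) = f (v p)
        rw [hv]
        exact congrArg (fun φ => φ p) hu'
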